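/- Let (H,R) be a factorizable finite-dimensional quasi-triangular Hopf algebra over an algebraically closed field k, and let W be a simple left H-module. Then W, regarded as a left H_R-comodule via ρ_R(w) = S(R_2^2 R_1^1) ⊗ R_2^1 R_1^2 w, is a simple left H_R-comodule, and End^{H_R}(W) ≅ k. -/

import Mathlib

open TensorProduct LinearMap

noncomputable section
namespace Paper

variable (k : Type*) [Field k] (H : Type*) [Ring H] [HopfAlgebra k H]

/-- The antipode of `H`. -/
abbrev S : H →ₗ[k] H := HopfAlgebra.antipode (R := k)

/-- The comultiplication of `H`. -/
abbrev Δ : H →ₗ[k] H ⊗[k] H := Coalgebra.comul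

/-- The counit of `H`. -/
abbrev ε : H →ₗ[k] k := Coalgebra.counit

/-- The left adjoint action as a linear map `H ⊗ H → H`, `h ⊗ x ↦ h₍₁₎ * x * S h₍₂₎`. -/
def adT : H ⊗[k] H →ₗ[k] H :=
  mul' k H ∘ₗ
    lTensor H (mul' k H) ∘ₗ
    lTensor H (TensorProduct.comm k H H).toLinearMap ∘ₗ
    (TensorProduct.assoc k H H H).toLinearMap ∘ₗ
    rTensor H (lTensor H (S k H)) ∘ₗ
    rTensor H (Δ k H)

/-- The left adjoint action, pointwise: `ad h x = h₍₁₎ * x * S h₍₂₎`. -/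
def ad (h x : H) : H := adT k H (h ⊗ₜ x)

variable (R : H ⊗[k] H)

/-- `R₁₂ ∈ H ⊗ H ⊗ H`. -/
def r12 : H ⊗[k] (H ⊗[k] H) :=
  (Algebra.TensorProduct.map (AlgHom.id k H) Algebra.TensorProduct.includeLeft) R

/-- `R₁₃ ∈ H ⊗ H ⊗ H`. -/
def r13 : H ⊗[k] (H ⊗[k] H) :=
  (Algebra.TensorProduct.map (AlgHom.id k H) Algebra.TensorProduct.includeRight) R

/-- `R₂₃ ∈ H ⊗ H ⊗ H`. -/
def r23 : H ⊗[k] (H ⊗[k] H) :=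
  (Algebra.TensorProduct.includeRight : (H ⊗[k] H) →ₐ[k] H ⊗[k] (H ⊗[k] H)) R

/-- `(H, R)` is a quasi-triangular Hopf algebra, i.e. `R` is invertible,
`R Δ(h) R⁻¹ = Δᵒᵖ(h)`, `(Δ ⊗ id)(R) = R₁₃R₂₃` and `(id ⊗ Δ)(R) = R₁₃R₁₂`. -/
structure IsQuasiTriangular : Prop where
  isUnit : IsUnit R
  comul_compat : ∀ h : H, R * Δ k H h = (TensorProduct.comm k H H) (Δ k H h) * R
  comul_rTensor :
    (TensorProduct.assoc k H H H) ((rTensor H (Δ k H)) R) = r13 k H R * r23 k H R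
  comul_lTensor : (lTensor H (Δ k H)) R = r13 k H R * r12 k H R

/-- The canonical element `u = Σ S(R₂² R₁¹) ⊗ R₂¹ R₁² = (S ⊗ id)(τ(R) · R) ∈ H ⊗ H`. -/
def uElt : H ⊗[k] H := rTensor H (S k H) ((TensorProduct.comm k H H) R * R)

/-- The element `Σ R₁² R₂¹ ⊗ R₁¹ R₂² = τ(R · τ(R)) ∈ H ⊗ H`. -/
def vElt : H ⊗[k] H := (TensorProduct.comm k H H) (R * (TensorProduct.comm k H H) R)

/-- The factorization map `H* → H`, `p ↦ ⟨p, R₁² R₂¹⟩ R₁¹ R₂²`. -/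
def factMap (p : Module.Dual k H) : H :=
  (TensorProduct.lid k H) ((rTensor H p) (vElt k H R))

/-- `(H, R)` is factorizable: the factorization map is bijective. -/
def IsFactorizable : Prop := Function.Bijective (factMap k H R)

/-- The comultiplication `Δ_R` of the transmuted braided group `H_R`:
`Δ_R(h) = h₍₁₎ S(R²) ⊗ R¹ ·ad h₍₂₎`. -/
def DeltaR : H →ₗ[k] H ⊗[k] H :=
  (TensorProduct.map
      ((mul' k H) ∘ₗ lTensor H (S k H))
      ((adT k H) ∘ₗ (TensorProduct.comm k H H).toLinearMap)) ∘ₗ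
    (tensorTensorTensorComm k H H H H).toLinearMap ∘ₗ
    (lTensor (H ⊗[k] H) (TensorProduct.comm k H H).toLinearMap) ∘ₗ
    ((TensorProduct.mk k (H ⊗[k] H) (H ⊗[k] H)).flip R) ∘ₗ
    (Δ k H)

section Comodule

variable {k H}
variable {V : Type*} [AddCommGroup V] [Module k V]
variable {P : Type*} [AddCommGroup P] [Module k P]

/-- `ρ : V → H ⊗ V` is a left comodule structure over the coalgebra `(H, Δ', ε')`. -/
def IsComodStr (Δ' : H →ₗ[k] H ⊗[k] H) (ε' : H →ₗ[k] k) (ρ : V →ₗ[k] H ⊗[k] V) : Prop :=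
  (TensorProduct.assoc k H H V).toLinearMap ∘ₗ rTensor V Δ' ∘ₗ ρ = lTensor H ρ ∘ₗ ρ ∧
    (TensorProduct.lid k V).toLinearMap ∘ₗ rTensor V ε' ∘ₗ ρ = LinearMap.id

/-- `act : H ⊗ V → V` is a left module structure over the algebra `H`. -/
def IsActionStr (act : H ⊗[k] V →ₗ[k] V) : Prop :=
  (∀ v : V, act (1 ⊗ₜ v) = v) ∧
    ∀ (g h : H) (v : V), act ((g * h) ⊗ₜ v) = act (g ⊗ₜ act (h ⊗ₜ v))

/-- The compatibility condition making `(V, act, ρ)` an object of `{}_H^{H_R}𝓜`: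
`ρ(h·v) = h₍₁₎ ·ad v₍₋₁₎ ⊗ h₍₂₎ · v₍₀₎`. -/
def IsYDCompat (act : H ⊗[k] V →ₗ[k] V) (ρ : V →ₗ[k] H ⊗[k] V) : Prop :=
  ρ ∘ₗ act =
    (TensorProduct.map (adT k H) act) ∘ₗ
      (tensorTensorTensorComm k H H H V).toLinearMap ∘ₗ (TensorProduct.map (Δ k H) ρ)

/-- `(V, act, ρ)` is an object of the category `{}_H^{H_R}𝓜` of relative Hopf modules. -/
def IsRelHopfModule (R : H ⊗[k] H) (act : H ⊗[k] V →ₗ[k] V) (ρ : V →ₗ[k] H ⊗[k] V) : Prop :=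
  IsActionStr act ∧ IsComodStr (DeltaR k H R) (ε k H) ρ ∧ IsYDCompat act ρ

/-- A submodule `U` is a subcomodule for the coaction `ρ : V → H ⊗ V`. -/
def IsSubcomodule (ρ : V →ₗ[k] H ⊗[k] V) (U : Submodule k V) : Prop :=
  ∀ u ∈ U, ρ u ∈ LinearMap.range (lTensor H U.subtype)

/-- A left comodule is simple if it is nonzero and has no nontrivial subcomodules. -/
def IsSimpleComodule (ρ : V →ₗ[k] H ⊗[k] V) : Prop :=
  (⊥ : Submodule k V) ≠ ⊤ ∧ ∀ U : Submodule k V, IsSubcomodule ρ U → U = ⊥ ∨ U = ⊤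

/-- A submodule `U ≤ V` is a subobject of `(V, act, ρ)` in `{}_H^{H_R}𝓜`
(i.e. stable under the action and a subcomodule). -/
def IsYDSubmodule (act : H ⊗[k] V →ₗ[k] V) (ρ : V →ₗ[k] H ⊗[k] V)
    (U : Submodule k V) : Prop :=
  (∀ (h : H), ∀ u ∈ U, act (h ⊗ₜ u) ∈ U) ∧ IsSubcomodule ρ U

/-- `(V, act, ρ)` is a simple (irreducible) object. -/
def IsSimpleYD (act : H ⊗[k] V →ₗ[k] V) (ρ : V →ₗ[k] H ⊗[k] V) : Prop :=
  (⊥ : Submodule k V) ≠ ⊤ ∧ ∀ U : Submodule k V, IsYDSubmodule act ρ U → U = ⊥ ∨ U = ⊤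

/-- The subcoalgebra `D_V ⊆ H_R` associated with a comodule `(V, ρ)`:
the span of all `v₍₋₁₎ ⟨φ, v₍₀₎⟩`. -/
def Dspace (ρ : V →ₗ[k] H ⊗[k] V) : Submodule k H :=
  Submodule.span k {x : H | ∃ (v : V) (φ : Module.Dual k V),
    x = (TensorProduct.rid k H) ((lTensor H φ) (ρ v))}

end Comodule

section Coalg

variable {k H}

/-- A submodule `C ≤ H` is a subcoalgebra for the comultiplication `Δ'`. -/
def IsSubcoalgebra (Δ' : H →ₗ[k] H ⊗[k] H) (C : Submodule k H) : Prop :=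
  ∀ c ∈ C, Δ' c ∈ LinearMap.range (TensorProduct.map C.subtype C.subtype)

/-- A subcoalgebra is simple if it is nonzero and contains no nontrivial subcoalgebra. -/
def IsSimpleSubcoalgebra (Δ' : H →ₗ[k] H ⊗[k] H) (C : Submodule k H) : Prop :=
  C ≠ ⊥ ∧ IsSubcoalgebra Δ' C ∧
    ∀ C' ≤ C, IsSubcoalgebra Δ' C' → C' = ⊥ ∨ C' = C

/-- A coalgebra is cosemisimple if it is the sum of its simple subcoalgebras. -/
def IsCosemisimple (Δ' : H →ₗ[k] H ⊗[k] H) : Prop :=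
  sSup {C : Submodule k H | IsSimpleSubcoalgebra Δ' C} = ⊤

/-- A submodule `C ≤ H` is `H`-stable (for the left adjoint action). -/
def IsHStable (C : Submodule k H) : Prop :=
  ∀ h : H, ∀ c ∈ C, ad k H h c ∈ C

end Coalg

section ModuleMaps

variable {k H}
variable (W : Type*) [AddCommGroup W] [Module k W] [Module H W] [IsScalarTower k H W]
variable (M : Type*) [AddCommGroup M] [Module k M] [Module H M] [IsScalarTower k H M]

/-- The `H`-module structure of `W` as a linear map `H ⊗ W → W`. -/
def actT : H ⊗[k] W →ₗ[k] W :=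
  TensorProduct.lift (Algebra.lsmul k k W).toLinearMap

variable {W M}

/-- The left `H_R`-comodule structure on a module with action `aW`, induced by the
element `u ∈ H ⊗ H`: `ρ_R(w) = S(R₂² R₁¹) ⊗ R₂¹ R₁² w`. -/
def coactR (R : H ⊗[k] H) {W : Type*} [AddCommGroup W] [Module k W]
    (aW : H ⊗[k] W →ₗ[k] W) : W →ₗ[k] H ⊗[k] W :=
  (lTensor H aW) ∘ₗ (TensorProduct.assoc k H H W).toLinearMap ∘ₗ
    (TensorProduct.mk k (H ⊗[k] H) W (uElt k H R))

/-- The diagonal `H`-action on `W ⊗ M`: `h · (w ⊗ m) = h₍₁₎ w ⊗ h₍₂₎ m`. -/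
def diagAct {W M : Type*} [AddCommGroup W] [Module k W] [AddCommGroup M] [Module k M]
    (aW : H ⊗[k] W →ₗ[k] W) (aM : H ⊗[k] M →ₗ[k] M) :
    H ⊗[k] (W ⊗[k] M) →ₗ[k] W ⊗[k] M :=
  (TensorProduct.map aW aM) ∘ₗ (tensorTensorTensorComm k H H W M).toLinearMap ∘ₗ
    rTensor (W ⊗[k] M) (Δ k H)

/-- The coaction on `W̄ ⊗ M` (coacting on the first factor only). -/
def barCoact {W : Type*} [AddCommGroup W] [Module k W]
    (ρ : W →ₗ[k] H ⊗[k] W) (M : Type*) [AddCommGroup M] [Module k M] :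
    W ⊗[k] M →ₗ[k] H ⊗[k] (W ⊗[k] M) :=
  (TensorProduct.assoc k H W M).toLinearMap ∘ₗ rTensor M ρ

/-- The `H`-action on `H ⊗ W` by left multiplication on the first factor. -/
def regAct (W : Type*) [AddCommGroup W] [Module k W] :
    H ⊗[k] (H ⊗[k] W) →ₗ[k] H ⊗[k] W :=
  rTensor W (mul' k H) ∘ₗ (TensorProduct.assoc k H H W).symm.toLinearMap

/-- The `H_R`-coaction on `H ⊗ W` induced by a coaction `ρ` on `W`:
`ρ(h ⊗ w) = h₍₁₎ ·ad w₍₋₁₎ ⊗ h₍₂₎ ⊗ w₍₀₎`. -/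
def inducedCoact {W : Type*} [AddCommGroup W] [Module k W]
    (ρ : W →ₗ[k] H ⊗[k] W) : H ⊗[k] W →ₗ[k] H ⊗[k] (H ⊗[k] W) :=
  rTensor (H ⊗[k] W) (adT k H) ∘ₗ (tensorTensorTensorComm k H H H W).toLinearMap ∘ₗ
    TensorProduct.map (Δ k H) ρ

/-- The left `H`-module structure on `W*` given by `⟨h φ, w⟩ = ⟨φ, S⁻¹(h) w⟩`,
where `S'` is the (given) inverse of the antipode. -/
def dualAct {W : Type*} [AddCommGroup W] [Module k W]
    (S' : H →ₗ[k] H) (aW : H ⊗[k] W →ₗ[k] W) :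
    H ⊗[k] Module.Dual k W →ₗ[k] Module.Dual k W :=
  TensorProduct.lift
    (((llcomp k W W k).flip) ∘ₗ
      ((llcomp k W (H ⊗[k] W) W aW) ∘ₗ (TensorProduct.mk k H W) ∘ₗ S'))

end ModuleMaps

section DualComod

variable {k H}
variable {W : Type*} [AddCommGroup W] [Module k W] [Module.Finite k W] [Module.Free k W]

/-- The right `D`-comodule structure on `W*` induced from a left coaction `ρ` on `W`,
characterized by `Σ ⟨φ₍₀₎, w⟩ φ₍₁₎ = Σ w₍₋₁₎ ⟨φ, w₍₀₎⟩`. -/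
def dualCoact (ρ : W →ₗ[k] H ⊗[k] W) :
    Module.Dual k W →ₗ[k] Module.Dual k W ⊗[k] H :=
  (dualTensorHomEquiv k W H).symm.toLinearMap ∘ₗ
    (lcomp k H ρ) ∘ₗ
    (llcomp k (H ⊗[k] W) (H ⊗[k] k) H (TensorProduct.rid k H).toLinearMap) ∘ₗ
    (lTensorHom (R := k) H)

end DualComod

section Cotensor

variable {k H}
variable {P V : Type*} [AddCommGroup P] [Module k P] [AddCommGroup V] [Module k V]

/-- The cotensor product `P □ V` of a right comodule `(P, ρ')` and a left comodule
`(V, ρ)`, realized as a subspace of `P ⊗ V`. -/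
def cotensor (ρ' : P →ₗ[k] P ⊗[k] H) (ρ : V →ₗ[k] H ⊗[k] V) :
    Submodule k (P ⊗[k] V) :=
  LinearMap.ker
    ((TensorProduct.assoc k P H V).toLinearMap ∘ₗ rTensor V ρ' - lTensor P ρ)

end Cotensor

section NW

variable {k H}
variable {W : Type*} [AddCommGroup W] [Module k W] [Module.Finite k W] [Module.Free k W]

/-- The underlying subspace of the `R`-adjoint-stable algebra
`N_W = W* □_D (H ⊗ W)`. -/
def NWspace (ρ : W →ₗ[k] H ⊗[k] W) :
    Submodule k (Module.Dual k W ⊗[k] (H ⊗[k] W)) :=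
  cotensor (dualCoact ρ) (inducedCoact ρ)

variable (k H W)

/-- The multiplication of `N_W` as a linear map on the ambient space
`W* ⊗ (H ⊗ W)`: `(φ ⊗ h ⊗ w) ∘ (ψ ⊗ g ⊗ v) = ψ ⊗ g h ⊗ ⟨φ, v⟩ w`. -/
def muNW :
    (Module.Dual k W ⊗[k] (H ⊗[k] W)) ⊗[k] (Module.Dual k W ⊗[k] (H ⊗[k] W)) →ₗ[k]
      Module.Dual k W ⊗[k] (H ⊗[k] W) :=
  (TensorProduct.assoc k (Module.Dual k W) H W).toLinearMap ∘ₗ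
    (TensorProduct.map LinearMap.id
      (((TensorProduct.lid k W).toLinearMap) ∘ₗ
        (rTensor W (contractLeft k W)) ∘ₗ
        (TensorProduct.assoc k (Module.Dual k W) W W).symm.toLinearMap ∘ₗ
        (lTensor (Module.Dual k W) (TensorProduct.comm k W W).toLinearMap))) ∘ₗ
    (tensorTensorTensorComm k (Module.Dual k W) (Module.Dual k W) H
      (W ⊗[k] W)).toLinearMap ∘ₗ
    (TensorProduct.map (TensorProduct.comm k (Module.Dual k W)
        (Module.Dual k W)).toLinearMap
      ((TensorProduct.map ((mul' k H) ∘ₗ (TensorProduct.comm k H H).toLinearMap)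
          LinearMap.id) ∘ₗ
        (tensorTensorTensorComm k H W H W).toLinearMap)) ∘ₗ
    (tensorTensorTensorComm k (Module.Dual k W) (H ⊗[k] W) (Module.Dual k W)
      (H ⊗[k] W)).toLinearMap

variable {k H W}

/-- The multiplication of `N_W`, pointwise. -/
def muN (x y : Module.Dual k W ⊗[k] (H ⊗[k] W)) :
    Module.Dual k W ⊗[k] (H ⊗[k] W) :=
  muNW k H W (x ⊗ₜ y)

variable (k H W)

/-- The left action of (the ambient space of) `N_W` on `H ⊗ W`:
`(φ ⊗ h' ⊗ w') · (h ⊗ w) = h h' ⊗ ⟨φ, w⟩ w'`. -/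
def nuNW :
    (Module.Dual k W ⊗[k] (H ⊗[k] W)) ⊗[k] (H ⊗[k] W) →ₗ[k] H ⊗[k] W :=
  (TensorProduct.map (mul' k H)
      (((TensorProduct.lid k W).toLinearMap) ∘ₗ
        (rTensor W (contractLeft k W)) ∘ₗ
        (TensorProduct.assoc k (Module.Dual k W) W W).symm.toLinearMap ∘ₗ
        (lTensor (Module.Dual k W) (TensorProduct.comm k W W).toLinearMap))) ∘ₗ
    (tensorTensorTensorComm k H (Module.Dual k W) H (W ⊗[k] W)).toLinearMap ∘ₗ
    (TensorProduct.map (TensorProduct.comm k (Module.Dual k W) H).toLinearMap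
      (TensorProduct.assoc k H W W).toLinearMap) ∘ₗ
    (tensorTensorTensorComm k (Module.Dual k W) (H ⊗[k] W) H W).toLinearMap

/-- The right action of (the ambient space of) `N_W` on `W* ⊗ V` (for `V` a comodule),
`(φ ⊗ v) · (ψ ⊗ h ⊗ w) = ψ ⊗ ⟨φ, w⟩ (h · v)`, relative to an action `aV` on `V`. -/
def actNW (V : Type*) [AddCommGroup V] [Module k V] (aV : H ⊗[k] V →ₗ[k] V) :
    (Module.Dual k W ⊗[k] V) ⊗[k] (Module.Dual k W ⊗[k] (H ⊗[k] W)) →ₗ[k]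
      Module.Dual k W ⊗[k] V :=
  (TensorProduct.rid k (Module.Dual k W ⊗[k] V)).toLinearMap ∘ₗ
    (TensorProduct.map LinearMap.id (contractLeft k W)) ∘ₗ
    (tensorTensorTensorComm k (Module.Dual k W) (Module.Dual k W) V W).toLinearMap ∘ₗ
    (TensorProduct.map (TensorProduct.comm k (Module.Dual k W)
        (Module.Dual k W)).toLinearMap
      ((rTensor W aV) ∘ₗ (rTensor W (TensorProduct.comm k V H).toLinearMap) ∘ₗ
        (TensorProduct.assoc k V H W).symm.toLinearMap)) ∘ₗ
    (tensorTensorTensorComm k (Module.Dual k W) V (Module.Dual k W)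
      (H ⊗[k] W)).toLinearMap

variable {k H W}

/-- Pointwise right `N_W`-action. -/
def actN {V : Type*} [AddCommGroup V] [Module k V] (aV : H ⊗[k] V →ₗ[k] V)
    (x : Module.Dual k W ⊗[k] V) (y : Module.Dual k W ⊗[k] (H ⊗[k] W)) :
    Module.Dual k W ⊗[k] V :=
  actNW k H W V aV (x ⊗ₜ y)

variable (k H W)

/-- The evaluation map `(W* ⊗ V) ⊗ (H ⊗ W) → V`, `(φ ⊗ v) ⊗ (h ⊗ w) ↦ ⟨φ, w⟩ h·v`. -/
def evNW (V : Type*) [AddCommGroup V] [Module k V] (aV : H ⊗[k] V →ₗ[k] V) :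
    (Module.Dual k W ⊗[k] V) ⊗[k] (H ⊗[k] W) →ₗ[k] V :=
  (TensorProduct.rid k V).toLinearMap ∘ₗ
    (TensorProduct.map aV (contractLeft k W)) ∘ₗ
    (tensorTensorTensorComm k H (Module.Dual k W) V W).toLinearMap ∘ₗ
    (TensorProduct.map (TensorProduct.comm k (Module.Dual k W) H).toLinearMap
      LinearMap.id) ∘ₗ
    (tensorTensorTensorComm k (Module.Dual k W) V H W).toLinearMap

variable {k H W}

/-- The canonical (coevaluation) element `Σᵢ wᵢ* ⊗ wᵢ ∈ W* ⊗ W` for a dual basis. -/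
def coevElt : Module.Dual k W ⊗[k] W :=
  (dualTensorHomEquiv k W W).symm LinearMap.id

end NW

section Maps

variable {k H}

/-- The map `H ⊗ W → W̄ ⊗ H`, `h ⊗ w ↦ h₍₁₎ w ⊗ h₍₂₎`. -/
def betaMap (W : Type*) [AddCommGroup W] [Module k W] [Module H W]
    [IsScalarTower k H W] : H ⊗[k] W →ₗ[k] W ⊗[k] H :=
  rTensor H (actT W) ∘ₗ
    (TensorProduct.assoc k H W H).symm.toLinearMap ∘ₗ
    lTensor H (TensorProduct.comm k H W).toLinearMap ∘ₗ
    (TensorProduct.assoc k H H W).toLinearMap ∘ₗ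
    rTensor W (Δ k H)

/-- The inverse map `W̄ ⊗ H → H ⊗ W`, `w ⊗ h ↦ h₍₂₎ ⊗ S⁻¹(h₍₁₎) w`
(where `S'` is the inverse of the antipode). -/
def gammaMap (W : Type*) [AddCommGroup W] [Module k W] [Module H W]
    [IsScalarTower k H W] (S' : H →ₗ[k] H) : W ⊗[k] H →ₗ[k] H ⊗[k] W :=
  (TensorProduct.comm k W H).toLinearMap ∘ₗ
    rTensor H (actT W) ∘ₗ
    rTensor H (rTensor W S') ∘ₗ
    rTensor H (TensorProduct.comm k W H).toLinearMap ∘ₗ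
    (TensorProduct.assoc k W H H).symm.toLinearMap ∘ₗ
    lTensor W (Δ k H)

/-- The map `K : H ⊗ (H ⊗ W) → H ⊗ W`, `a ⊗ (b ⊗ w) ↦ b ⊗ (a · w)`. -/
def swapActMap (W : Type*) [AddCommGroup W] [Module k W] [Module H W]
    [IsScalarTower k H W] : H ⊗[k] (H ⊗[k] W) →ₗ[k] H ⊗[k] W :=
  lTensor H (actT W) ∘ₗ
    (TensorProduct.assoc k H H W).toLinearMap ∘ₗ
    rTensor W (TensorProduct.comm k H H).toLinearMap ∘ₗ
    (TensorProduct.assoc k H H W).symm.toLinearMap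

/-- The map `ψ : H → W* ⊗ (H ⊗ W)`, `ψ(h) = Σᵢ wᵢ* ⊗ h₍₂₎ ⊗ S⁻¹(h₍₁₎) wᵢ`. -/
def psiMap (W : Type*) [AddCommGroup W] [Module k W] [Module H W]
    [IsScalarTower k H W] [Module.Finite k W] [Module.Free k W]
    (S' : H →ₗ[k] H) : H →ₗ[k] Module.Dual k W ⊗[k] (H ⊗[k] W) :=
  lTensor (Module.Dual k W) (swapActMap W) ∘ₗ
    (TensorProduct.assoc k (Module.Dual k W) H (H ⊗[k] W)).toLinearMap ∘ₗ
    (TensorProduct.map (TensorProduct.comm k H (Module.Dual k W)).toLinearMap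
      LinearMap.id) ∘ₗ
    (tensorTensorTensorComm k H H (Module.Dual k W) W).toLinearMap ∘ₗ
    ((TensorProduct.mk k (H ⊗[k] H)
        (Module.Dual k W ⊗[k] W)).flip (coevElt (W := W))) ∘ₗ
    rTensor H S' ∘ₗ
    (Δ k H)

/-- The map `j : M → W* ⊗ (W ⊗ M)`, `m ↦ Σᵢ wᵢ* ⊗ (wᵢ ⊗ m)`. -/
def jMap (W : Type*) [AddCommGroup W] [Module k W] [Module.Finite k W]
    [Module.Free k W] (M : Type*) [AddCommGroup M] [Module k M] :
    M →ₗ[k] Module.Dual k W ⊗[k] (W ⊗[k] M) :=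
  (TensorProduct.assoc k (Module.Dual k W) W M).toLinearMap ∘ₗ
    (TensorProduct.mk k (Module.Dual k W ⊗[k] W) M (coevElt (W := W)))

/-- The map `U ⊗ (H ⊗ X) → H ⊗ (U ⊗ X)`, `u ⊗ (a ⊗ x) ↦ a ⊗ (u ⊗ x)`. -/
def pushOut (U X : Type*) [AddCommGroup U] [Module k U] [AddCommGroup X]
    [Module k X] : U ⊗[k] (H ⊗[k] X) →ₗ[k] H ⊗[k] (U ⊗[k] X) :=
  (TensorProduct.assoc k H U X).toLinearMap ∘ₗ
    rTensor X (TensorProduct.comm k U H).toLinearMap ∘ₗ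
    (TensorProduct.assoc k U H X).symm.toLinearMap

/-- The map `H ⊗ (U ⊗ X) → U ⊗ (H ⊗ X)`, `a ⊗ (u ⊗ x) ↦ u ⊗ (a ⊗ x)`. -/
def pullIn (U X : Type*) [AddCommGroup U] [Module k U] [AddCommGroup X]
    [Module k X] : H ⊗[k] (U ⊗[k] X) →ₗ[k] U ⊗[k] (H ⊗[k] X) :=
  (TensorProduct.assoc k U H X).toLinearMap ∘ₗ
    rTensor X (TensorProduct.comm k H U).toLinearMap ∘ₗ
    (TensorProduct.assoc k H U X).symm.toLinearMap

end Maps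

section EndAlg

variable {k H}
variable (W : Type*) [AddCommGroup W] [Module k W] [Module H W] [IsScalarTower k H W]

/-- The action of `H` on `W` as an algebra map `H → End_k W`. -/
def actEnd : H →ₗ[k] Module.End k W := (Algebra.lsmul k k W).toLinearMap

/-- The `H`-module structure on `(End^{H_R}(W))ᵒᵖ`:
`(h · α)(w) = h₍₂₎ α (S⁻¹(h₍₁₎) w)`. -/
def endAct (S' : H →ₗ[k] H) : H →ₗ[k] Module.End k W →ₗ[k] Module.End k W :=
  TensorProduct.lift
    (((llcomp k (Module.End k W) (Module.End k W) (Module.End k W)) ∘ₗ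
        ((llcomp k W W W) ∘ₗ (actEnd W))).flip ∘ₗ
      (((llcomp k W W W).flip) ∘ₗ (actEnd W) ∘ₗ S')) ∘ₗ
    (Δ k H)

end EndAlg

section Smash

variable (B : Type*) [AddCommGroup B] [Module k B]

/-- The smash product multiplication on `B ⊗ H`, for a multiplication `mulB` on `B`
and an `H`-action `aB` on `B`: `(a ⊗ h)(b ⊗ g) = a (h₍₁₎ · b) ⊗ h₍₂₎ g`. -/
def smashMul (mulB : B ⊗[k] B →ₗ[k] B) (aB : H ⊗[k] B →ₗ[k] B) :
    (B ⊗[k] H) ⊗[k] (B ⊗[k] H) →ₗ[k] B ⊗[k] H :=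
  (TensorProduct.map
      (mulB ∘ₗ lTensor B aB ∘ₗ (TensorProduct.assoc k B H B).toLinearMap)
      (mul' k H)) ∘ₗ
    (tensorTensorTensorComm k (B ⊗[k] H) H B H).toLinearMap ∘ₗ
    (TensorProduct.map
      ((TensorProduct.assoc k B H H).symm.toLinearMap ∘ₗ lTensor B (Δ k H))
      LinearMap.id)

/-- The multiplication on (the ambient space of) `W* □_D W = (End^{H_R} W)ᵒᵖ`:
`(φ ⊗ w)(ψ ⊗ v) = ⟨ψ, w⟩ φ ⊗ v`. -/
def muEndOp (W : Type*) [AddCommGroup W] [Module k W] :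
    (Module.Dual k W ⊗[k] W) ⊗[k] (Module.Dual k W ⊗[k] W) →ₗ[k]
      Module.Dual k W ⊗[k] W :=
  (TensorProduct.rid k (Module.Dual k W ⊗[k] W)).toLinearMap ∘ₗ
    (TensorProduct.map LinearMap.id
      ((contractLeft k W) ∘ₗ (TensorProduct.comm k W (Module.Dual k W)).toLinearMap)) ∘ₗ
    (tensorTensorTensorComm k (Module.Dual k W) W W (Module.Dual k W)).toLinearMap ∘ₗ
    (TensorProduct.map LinearMap.id (TensorProduct.comm k (Module.Dual k W) W).toLinearMap)

end Smash

section DualAlg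

/-- The convolution product on `H*`: `(f * g)(x) = f(x₍₁₎) g(x₍₂₎)`. -/
def conv (f g : Module.Dual k H) : Module.Dual k H :=
  (mul' k k) ∘ₗ (TensorProduct.map f g) ∘ₗ (Δ k H)

/-- The hit action `h ⇀ f`, `(h ⇀ f)(x) = f(x h)`. -/
def hitL (h : H) (f : Module.Dual k H) : Module.Dual k H :=
  f ∘ₗ (LinearMap.mulRight k h)

/-- The hit action `f ↼ h`, `(f ↼ h)(x) = f(h x)`. -/
def hitR (f : Module.Dual k H) (h : H) : Module.Dual k H :=
  f ∘ₗ (LinearMap.mulLeft k h)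

/-- The left `H`-module structure `⇀⇀` on `(H_R)* = H*`:
`⟨h ⇀⇀ f, x⟩ = f(S(h) ·ad x)`. -/
def hitAd (h : H) (f : Module.Dual k H) : Module.Dual k H :=
  f ∘ₗ (adT k H) ∘ₗ (TensorProduct.mk k H H (S k H h))

variable (R : H ⊗[k] H)

/-- The map `Φ : (H_R)* → H_R`, `Φ(f) = ⟨f, S(R₂² R₁¹)⟩ R₂¹ R₁²  = (f ⊗ id)(u)`. -/
def PhiMap : Module.Dual k H →ₗ[k] H :=
  (TensorProduct.lid k H).toLinearMap ∘ₗ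
    (LinearMap.applyₗ (uElt k H R)) ∘ₗ
    (rTensorHom (R := k) H)

/-- The multiplication `*_R` of the dual Hopf algebra `(H_R)*`:
`f *_R g = (S(R₁² R₂²) ⇀ g) * (S(R₂¹) ⇀ f ↼ R₁¹)`, i.e.
`(f *_R g)(x) = Σ g(x₍₁₎ S(R₁² R₂²)) f(R₁¹ x₍₂₎ S(R₂¹))`. -/
def mulRAux (f g : Module.Dual k H) :
    ((H ⊗[k] H) ⊗[k] (H ⊗[k] H)) ⊗[k] (H ⊗[k] H) →ₗ[k] k :=
  (mul' k k) ∘ₗ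
    (TensorProduct.map
      (g ∘ₗ (mul' k H) ∘ₗ lTensor H ((S k H) ∘ₗ (mul' k H)))
      (f ∘ₗ (mul' k H) ∘ₗ
        (TensorProduct.map (mul' k H) (S k H)))) ∘ₗ
    (TensorProduct.map
      (TensorProduct.comm k (H ⊗[k] H) H).toLinearMap
      ((TensorProduct.assoc k H H H).symm.toLinearMap ∘ₗ
        lTensor H (TensorProduct.comm k H H).toLinearMap ∘ₗ
        (TensorProduct.assoc k H H H).toLinearMap)) ∘ₗ
    (tensorTensorTensorComm k (H ⊗[k] H) (H ⊗[k] H) H H).toLinearMap ∘ₗ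
    (TensorProduct.map
      ((TensorProduct.comm k (H ⊗[k] H) (H ⊗[k] H)).toLinearMap ∘ₗ
        (tensorTensorTensorComm k H H H H).toLinearMap)
      LinearMap.id)

def mulR (f g : Module.Dual k H) : Module.Dual k H :=
  (mulRAux k H f g) ∘ₗ
    ((TensorProduct.mk k ((H ⊗[k] H) ⊗[k] (H ⊗[k] H)) (H ⊗[k] H)) (R ⊗ₜ R)) ∘ₗ
    (Δ k H)

/-- The comultiplication of the dual Hopf algebra `(H_R)*`: `f ↦ f₍₂₎ ⊗ f₍₁₎`,
dual to the multiplication of `H_R` (which is that of `H`). -/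
def dualComul [Module.Finite k H] : Module.Dual k H →ₗ[k]
    Module.Dual k H ⊗[k] Module.Dual k H :=
  (TensorProduct.comm k (Module.Dual k H) (Module.Dual k H)).toLinearMap ∘ₗ
    (TensorProduct.dualDistribEquiv k H H).symm.toLinearMap ∘ₗ
    (mul' k H).dualMap

end DualAlg

section More

variable {k H}

/-- The map `W̄ ⊗ W* → H`, `w ⊗ φ ↦ w₍₋₁₎ ⟨φ, w₍₀₎⟩`, for a coaction `ρ` on `W`. -/
def dMap {W : Type*} [AddCommGroup W] [Module k W] (ρ : W →ₗ[k] H ⊗[k] W) :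
    W ⊗[k] Module.Dual k W →ₗ[k] H :=
  (TensorProduct.rid k H).toLinearMap ∘ₗ
    lTensor H ((contractLeft k W) ∘ₗ
      (TensorProduct.comm k W (Module.Dual k W)).toLinearMap) ∘ₗ
    (TensorProduct.assoc k H W (Module.Dual k W)).toLinearMap ∘ₗ
    rTensor (Module.Dual k W) ρ

/-- A Yetter–Drinfeld submodule of `(H, ·ad, Δ)`:
a subspace stable under the adjoint action and under the coaction `Δ`. -/
def IsYDSubmoduleOfH (C : Submodule k H) : Prop :=
  (∀ h : H, ∀ c ∈ C, ad k H h c ∈ C) ∧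
    ∀ c ∈ C, Δ k H c ∈ LinearMap.range (lTensor H C.subtype)

/-- An irreducible Yetter–Drinfeld submodule of `(H, ·ad, Δ)`. -/
def IsIrredYDSubmoduleOfH (C : Submodule k H) : Prop :=
  C ≠ ⊥ ∧ IsYDSubmoduleOfH C ∧
    ∀ C' ≤ C, IsYDSubmoduleOfH C' → C' = ⊥ ∨ C' = C

/-- A linear equivalence intertwining two relative Hopf module structures. -/
def IsYDEquiv {V V' : Type*} [AddCommGroup V] [Module k V] [AddCommGroup V']
    [Module k V'] (aV : H ⊗[k] V →ₗ[k] V) (ρV : V →ₗ[k] H ⊗[k] V)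
    (aV' : H ⊗[k] V' →ₗ[k] V') (ρV' : V' →ₗ[k] H ⊗[k] V')
    (e : V ≃ₗ[k] V') : Prop :=
  (e.toLinearMap ∘ₗ aV = aV' ∘ₗ lTensor H e.toLinearMap) ∧
    ρV' ∘ₗ e.toLinearMap = lTensor H e.toLinearMap ∘ₗ ρV

end More

section AuxiliaryProofs

open Coalgebra HopfAlgebra

variable {k H}

/-! #### Generalities on the antipode -/

private lemma S_def : S k H = HopfAlgebra.antipode (R := k) (A := H) := rfl

private lemma S_one : S k H 1 = 1 := by
  have h := HopfAlgebra.mul_antipode_rTensor_comul_apply (R := k) (a := (1 : H))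
  simpa [S_def, Bialgebra.comul_one, Algebra.TensorProduct.one_def] using h

/-- A representation of `comul (x * y)` built from representations of `x` and `y`. -/
private def mulRepr {x y : H} (rx : Coalgebra.Repr k x (H × H)) (ry : Coalgebra.Repr k y (H × H)) :
    Coalgebra.Repr k (x * y) ((H × H) × (H × H)) where
  index := rx.index ×ˢ ry.index
  left := fun p => rx.left p.1 * ry.left p.2
  right := fun p => rx.right p.1 * ry.right p.2
  eq := by
    rw [Finset.sum_product, Bialgebra.comul_mul, ← rx.eq, ← ry.eq, Finset.sum_mul_sum]
    exact Finset.sum_congr rfl fun i _ => Finset.sum_congr rfl fun j _ =>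
      (Algebra.TensorProduct.tmul_mul_tmul _ _ _ _).symm

private lemma sum_mul_mul_antipode {x y : H} (rx : Coalgebra.Repr k x (H × H)) (ry : Coalgebra.Repr k y (H × H)) :
    ∑ i ∈ rx.index, ∑ j ∈ ry.index,
      (rx.left i * ry.left j) * S k H (rx.right i * ry.right j)
      = (Coalgebra.counit (R := k) x * Coalgebra.counit (R := k) y) • (1 : H) := by
  have h : ∑ p ∈ rx.index ×ˢ ry.index,
      (rx.left p.1 * ry.left p.2) *
        HopfAlgebra.antipode (R := k) (rx.right p.1 * ry.right p.2)
      = Coalgebra.counit (R := k) (x * y) • (1 : H) :=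
    HopfAlgebra.sum_mul_antipode_eq_smul (R := k) (mulRepr rx ry)
  rw [Finset.sum_product] at h
  simpa [S_def, Bialgebra.counit_mul] using h

private lemma sum_antipode_antipode_mul {x y : H} (rx : Coalgebra.Repr k x (H × H))
    (ry : Coalgebra.Repr k y (H × H)) :
    ∑ i ∈ rx.index, ∑ j ∈ ry.index,
      (S k H (ry.left j) * S k H (rx.left i)) * (rx.right i * ry.right j)
      = (Coalgebra.counit (R := k) x * Coalgebra.counit (R := k) y) • (1 : H) := by
  simp only [S_def]
  rw [Finset.sum_comm]
  have inner : ∀ j, ∑ i ∈ rx.index,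
      (HopfAlgebra.antipode (R := k) (ry.left j) * HopfAlgebra.antipode (R := k) (rx.left i))
        * (rx.right i * ry.right j)
      = Coalgebra.counit (R := k) x •
          (HopfAlgebra.antipode (R := k) (ry.left j) * ry.right j) := by
    intro j
    have hterm : ∀ i,
        (HopfAlgebra.antipode (R := k) (ry.left j) * HopfAlgebra.antipode (R := k) (rx.left i))
          * (rx.right i * ry.right j)
        = HopfAlgebra.antipode (R := k) (ry.left j) *
            ((HopfAlgebra.antipode (R := k) (rx.left i) * rx.right i) * ry.right j) := by
      intro i; rw [mul_assoc, ← mul_assoc (HopfAlgebra.antipode (R := k) (rx.left i))]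
    simp_rw [hterm, ← Finset.mul_sum, ← Finset.sum_mul]
    rw [HopfAlgebra.sum_antipode_mul_eq_smul (R := k) rx, smul_mul_assoc, one_mul,
      mul_smul_comm]
  simp_rw [inner]
  rw [← Finset.smul_sum, HopfAlgebra.sum_antipode_mul_eq_smul (R := k) ry, smul_smul]

private lemma sum_counit_smul_left {x : H} (rx : Coalgebra.Repr k x (H × H)) :
    ∑ i ∈ rx.index, Coalgebra.counit (R := k) (rx.right i) • rx.left i = x := by
  have h := Coalgebra.sum_tmul_counit_eq (R := k) rx
  apply_fun (TensorProduct.rid k H) at h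
  simp only [map_sum, TensorProduct.rid_tmul, one_smul] at h
  exact h

private lemma sum_counit_smul_right {x : H} (rx : Coalgebra.Repr k x (H × H)) :
    ∑ i ∈ rx.index, Coalgebra.counit (R := k) (rx.left i) • rx.right i = x := by
  have h := Coalgebra.sum_counit_tmul_eq (R := k) rx
  apply_fun (TensorProduct.lid k H) at h
  simp only [map_sum, TensorProduct.lid_tmul, one_smul] at h
  exact h

private lemma sum_counit_smul_S {x : H} (rx : Coalgebra.Repr k x (H × H)) :
    ∑ i ∈ rx.index, Coalgebra.counit (R := k) (rx.right i) • S k H (rx.left i) = S k H x := by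
  conv_rhs => rw [← sum_counit_smul_left (k := k) rx]
  rw [map_sum]
  simp [map_smul]

/-- The 6-fold contraction used in the proof of anti-multiplicativity of the antipode. -/
private def Psi0 : ((H ⊗[k] (H ⊗[k] H)) ⊗[k] (H ⊗[k] (H ⊗[k] H))) →ₗ[k] H :=
  mul' k H ∘ₗ
    (TensorProduct.map
      (mul' k H ∘ₗ TensorProduct.map (S k H) (S k H) ∘ₗ (TensorProduct.comm k H H).toLinearMap)
      (mul' k H ∘ₗ TensorProduct.map (mul' k H) (S k H ∘ₗ mul' k H) ∘ₗ
        (tensorTensorTensorComm k H H H H).toLinearMap)) ∘ₗ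
    (tensorTensorTensorComm k H (H ⊗[k] H) H (H ⊗[k] H)).toLinearMap

private lemma Psi0_tmul (x y z u v w : H) :
    Psi0 (k := k) ((x ⊗ₜ[k] (y ⊗ₜ[k] z)) ⊗ₜ[k] (u ⊗ₜ[k] (v ⊗ₜ[k] w))) =
      (S k H u * S k H x) * ((y * v) * S k H (z * w)) := by
  simp [Psi0]

private lemma compA {a b : H} (ra : Coalgebra.Repr k a (H × H)) (rb : Coalgebra.Repr k b (H × H))
    (rra : ∀ i, Coalgebra.Repr k (ra.right i) (H × H)) (rrb : ∀ i, Coalgebra.Repr k (rb.right i) (H × H)) :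
    Psi0 ((∑ i ∈ ra.index, ∑ j ∈ (rra i).index,
        ra.left i ⊗ₜ[k] ((rra i).left j ⊗ₜ[k] (rra i).right j)) ⊗ₜ[k]
      (∑ p ∈ rb.index, ∑ q ∈ (rrb p).index,
        rb.left p ⊗ₜ[k] ((rrb p).left q ⊗ₜ[k] (rrb p).right q)))
    = S k H b * S k H a := by
  simp only [TensorProduct.sum_tmul, TensorProduct.tmul_sum, map_sum, Psi0_tmul]
  calc
    ∑ p ∈ rb.index, ∑ q ∈ (rrb p).index, ∑ i ∈ ra.index, ∑ j ∈ (rra i).index,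
        (S k H (rb.left p) * S k H (ra.left i)) *
          (((rra i).left j * (rrb p).left q) * S k H ((rra i).right j * (rrb p).right q))
      = ∑ p ∈ rb.index, ∑ i ∈ ra.index, ∑ j ∈ (rra i).index, ∑ q ∈ (rrb p).index,
        (S k H (rb.left p) * S k H (ra.left i)) *
          (((rra i).left j * (rrb p).left q) * S k H ((rra i).right j * (rrb p).right q)) := by
        refine Finset.sum_congr rfl fun p _ => ?_
        rw [Finset.sum_comm]
        exact Finset.sum_congr rfl fun i _ => Finset.sum_comm
    _ = ∑ p ∈ rb.index, ∑ i ∈ ra.index,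
          (Coalgebra.counit (R := k) (ra.right i) * Coalgebra.counit (R := k) (rb.right p)) •
            (S k H (rb.left p) * S k H (ra.left i)) := by
        refine Finset.sum_congr rfl fun p _ => Finset.sum_congr rfl fun i _ => ?_
        simp_rw [← Finset.mul_sum]
        rw [sum_mul_mul_antipode (rra i) (rrb p), mul_smul_comm, mul_one]
    _ = ∑ p ∈ rb.index, ∑ i ∈ ra.index,
          (Coalgebra.counit (R := k) (rb.right p) • S k H (rb.left p)) *
            (Coalgebra.counit (R := k) (ra.right i) • S k H (ra.left i)) := by
        refine Finset.sum_congr rfl fun p _ => Finset.sum_congr rfl fun i _ => ?_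
        rw [smul_mul_smul_comm, mul_comm]
    _ = S k H b * S k H a := by
        rw [← Finset.sum_mul_sum, sum_counit_smul_S ra, sum_counit_smul_S rb]

private lemma compB {a b : H} (ra : Coalgebra.Repr k a (H × H)) (rb : Coalgebra.Repr k b (H × H))
    (rla : ∀ i, Coalgebra.Repr k (ra.left i) (H × H)) (rlb : ∀ i, Coalgebra.Repr k (rb.left i) (H × H)) :
    Psi0 ((∑ i ∈ ra.index, ∑ j ∈ (rla i).index,
        (rla i).left j ⊗ₜ[k] ((rla i).right j ⊗ₜ[k] ra.right i)) ⊗ₜ[k]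
      (∑ p ∈ rb.index, ∑ q ∈ (rlb p).index,
        (rlb p).left q ⊗ₜ[k] ((rlb p).right q ⊗ₜ[k] rb.right p)))
    = S k H (a * b) := by
  simp only [TensorProduct.sum_tmul, TensorProduct.tmul_sum, map_sum, Psi0_tmul]
  calc
    ∑ p ∈ rb.index, ∑ q ∈ (rlb p).index, ∑ i ∈ ra.index, ∑ j ∈ (rla i).index,
        (S k H ((rlb p).left q) * S k H ((rla i).left j)) *
          (((rla i).right j * (rlb p).right q) * S k H (ra.right i * rb.right p))
      = ∑ p ∈ rb.index, ∑ i ∈ ra.index, ∑ j ∈ (rla i).index, ∑ q ∈ (rlb p).index,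
        ((S k H ((rlb p).left q) * S k H ((rla i).left j)) *
          ((rla i).right j * (rlb p).right q)) * S k H (ra.right i * rb.right p) := by
        refine Finset.sum_congr rfl fun p _ => ?_
        rw [Finset.sum_comm]
        refine Finset.sum_congr rfl fun i _ => ?_
        rw [Finset.sum_comm]
        exact Finset.sum_congr rfl fun j _ => Finset.sum_congr rfl fun q _ =>
          (mul_assoc _ _ _).symm
    _ = ∑ p ∈ rb.index, ∑ i ∈ ra.index,
          (Coalgebra.counit (R := k) (ra.left i) * Coalgebra.counit (R := k) (rb.left p)) •
            S k H (ra.right i * rb.right p) := by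
        refine Finset.sum_congr rfl fun p _ => Finset.sum_congr rfl fun i _ => ?_
        simp_rw [← Finset.sum_mul]
        rw [sum_antipode_antipode_mul (rla i) (rlb p), smul_mul_assoc, one_mul]
    _ = ∑ p ∈ rb.index, ∑ i ∈ ra.index,
          S k H ((Coalgebra.counit (R := k) (ra.left i) • ra.right i) *
            (Coalgebra.counit (R := k) (rb.left p) • rb.right p)) := by
        refine Finset.sum_congr rfl fun p _ => Finset.sum_congr rfl fun i _ => ?_
        rw [smul_mul_smul_comm, map_smul]
    _ = S k H (a * b) := by
        rw [Finset.sum_comm]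
        conv_rhs => rw [← sum_counit_smul_right (k := k) ra, ← sum_counit_smul_right (k := k) rb]
        rw [Finset.sum_mul_sum]
        simp only [map_sum]

private theorem S_mul (a b : H) : S k H (a * b) = S k H b * S k H a := by
  classical
  let ra := Coalgebra.Repr.arbitrary k a
  let rb := Coalgebra.Repr.arbitrary k b
  let rra : ∀ i, Coalgebra.Repr k (ra.right i) (H × H) := fun i => Coalgebra.Repr.arbitrary k _
  let rla : ∀ i, Coalgebra.Repr k (ra.left i) (H × H) := fun i => Coalgebra.Repr.arbitrary k _
  let rrb : ∀ i, Coalgebra.Repr k (rb.right i) (H × H) := fun i => Coalgebra.Repr.arbitrary k _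
  let rlb : ∀ i, Coalgebra.Repr k (rb.left i) (H × H) := fun i => Coalgebra.Repr.arbitrary k _
  have key := congrArg (Psi0 (k := k))
    (congrArg₂ (· ⊗ₜ[k] ·) (Coalgebra.sum_tmul_tmul_eq ra rla rra)
      (Coalgebra.sum_tmul_tmul_eq rb rlb rrb))
  rw [compA ra rb rra rrb] at key
  rw [compB ra rb rla rlb] at key
  exact key

end AuxiliaryProofs

section AuxiliaryProofs2

open Coalgebra HopfAlgebra

variable {k H}

/-- `x ⊗ y ↦ ε(x)1 ⊗ y`. -/
private def N1 : H ⊗[k] H →ₗ[k] H ⊗[k] H :=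
  rTensor H (Algebra.linearMap k H ∘ₗ (ε k H))

/-- `x ⊗ y ↦ x ⊗ ε(y)1`. -/
private def N2 : H ⊗[k] H →ₗ[k] H ⊗[k] H :=
  lTensor H (Algebra.linearMap k H ∘ₗ (ε k H))

private def Phi1 : H ⊗[k] (H ⊗[k] H) →ₐ[k] H ⊗[k] H :=
  (Algebra.TensorProduct.lid k (H ⊗[k] H)).toAlgHom.comp
    (Algebra.TensorProduct.map (Bialgebra.counitAlgHom k H) (AlgHom.id k (H ⊗[k] H)))

private lemma Phi1_tmul (x : H) (z : H ⊗[k] H) :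
    Phi1 (x ⊗ₜ[k] z) = Coalgebra.counit (R := k) x • z := by
  simp [Phi1]

private def E2 : H ⊗[k] H →ₐ[k] H :=
  (Algebra.TensorProduct.rid k k H).toAlgHom.comp
    (Algebra.TensorProduct.map (AlgHom.id k H) (Bialgebra.counitAlgHom k H))

private lemma E2_tmul (x y : H) :
    E2 (x ⊗ₜ[k] y) = Coalgebra.counit (R := k) y • x := by
  simp [E2]

private def Phi2 : H ⊗[k] (H ⊗[k] H) →ₐ[k] H ⊗[k] H :=
  Algebra.TensorProduct.map (AlgHom.id k H) E2

private lemma Phi1_assoc_comul (z : H ⊗[k] H) :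
    Phi1 ((TensorProduct.assoc k H H H) ((rTensor H (Δ k H)) z)) = z := by
  have h1 : (Phi1 (k := k) (H := H)).toLinearMap ∘ₗ (TensorProduct.assoc k H H H).toLinearMap
      = rTensor H ((TensorProduct.lid k H).toLinearMap ∘ₗ rTensor H (ε k H)) :=
    TensorProduct.ext_threefold fun x y w => by
      simp [Phi1, TensorProduct.smul_tmul']
  have h2 : ((TensorProduct.lid k H).toLinearMap ∘ₗ rTensor H (ε k H)) ∘ₗ (Δ k H)
      = LinearMap.id := by
    rw [LinearMap.comp_assoc,
      show rTensor H (ε k H) ∘ₗ (Δ k H) = (TensorProduct.mk k k H) 1 from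
        Coalgebra.rTensor_counit_comp_comul]
    exact LinearMap.ext fun x => by simp
  have h3 := LinearMap.congr_fun h1 ((rTensor H (Δ k H)) z)
  simp only [LinearMap.coe_comp, Function.comp_apply, AlgHom.toLinearMap_apply,
    LinearEquiv.coe_coe] at h3
  rw [h3, ← LinearMap.comp_apply, ← LinearMap.rTensor_comp, h2, LinearMap.rTensor_id,
    LinearMap.id_apply]

private lemma Phi1_r13 (z : H ⊗[k] H) : Phi1 (r13 k H z) = N1 z := by
  have h : (Phi1 (k := k) (H := H)).toLinearMap ∘ₗ
      (Algebra.TensorProduct.map (AlgHom.id k H)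
        (Algebra.TensorProduct.includeRight (A := H) (B := H))).toLinearMap
      = N1 (k := k) (H := H) :=
    TensorProduct.ext' fun x y => by
      simp [Phi1, N1, TensorProduct.smul_tmul', Algebra.algebraMap_eq_smul_one]
  have h2 := LinearMap.congr_fun h z
  exact h2

private lemma Phi1_r23 (z : H ⊗[k] H) : Phi1 (r23 k H z) = z := by
  rw [show r23 k H z = (1 : H) ⊗ₜ[k] z from rfl, Phi1_tmul]
  simp

private lemma Phi2_lTensor_comul (z : H ⊗[k] H) :
    Phi2 ((lTensor H (Δ k H)) z) = z := by
  have hE2 : (E2 (k := k) (H := H)).toLinearMap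
      = (TensorProduct.rid k H).toLinearMap ∘ₗ lTensor H (ε k H) :=
    TensorProduct.ext' fun x y => by simp [E2]
  have h1 : (Phi2 (k := k) (H := H)).toLinearMap
      = lTensor H ((TensorProduct.rid k H).toLinearMap ∘ₗ lTensor H (ε k H)) :=
    TensorProduct.ext' fun x y => by
      simp only [AlgHom.toLinearMap_apply, Phi2, Algebra.TensorProduct.map_tmul,
        AlgHom.coe_id, id_eq, LinearMap.lTensor_tmul]
      rw [← hE2]
      rfl
  have h2 : ((TensorProduct.rid k H).toLinearMap ∘ₗ lTensor H (ε k H)) ∘ₗ (Δ k H)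
      = LinearMap.id := by
    rw [LinearMap.comp_assoc,
      show lTensor H (ε k H) ∘ₗ (Δ k H) = (TensorProduct.mk k H k).flip 1 from
        Coalgebra.lTensor_counit_comp_comul]
    exact LinearMap.ext fun x => by simp
  have h3 := LinearMap.congr_fun h1 ((lTensor H (Δ k H)) z)
  simp only [AlgHom.toLinearMap_apply] at h3
  rw [h3, ← LinearMap.comp_apply, ← LinearMap.lTensor_comp, h2, LinearMap.lTensor_id,
    LinearMap.id_apply]

private lemma Phi2_r13 (z : H ⊗[k] H) : Phi2 (r13 k H z) = N2 z := by
  have h : (Phi2 (k := k) (H := H)).toLinearMap ∘ₗ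
      (Algebra.TensorProduct.map (AlgHom.id k H)
        (Algebra.TensorProduct.includeRight (A := H) (B := H))).toLinearMap
      = N2 (k := k) (H := H) :=
    TensorProduct.ext' fun x y => by
      simp [Phi2, E2, N2, Algebra.algebraMap_eq_smul_one]
  have h2 := LinearMap.congr_fun h z
  exact h2

private lemma Phi2_r12 (z : H ⊗[k] H) : Phi2 (r12 k H z) = z := by
  have h : (Phi2 (k := k) (H := H)).toLinearMap ∘ₗ
      (Algebra.TensorProduct.map (AlgHom.id k H)
        (Algebra.TensorProduct.includeLeft (S := k))).toLinearMap
      = LinearMap.id :=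
    TensorProduct.ext' fun x y => by
      simp [Phi2, E2]
  have h2 := LinearMap.congr_fun h z
  exact h2

variable (R : H ⊗[k] H)

private lemma N1_R (hR : IsQuasiTriangular k H R) : N1 R = 1 := by
  have h := congrArg (Phi1 (k := k) (H := H)) hR.comul_rTensor
  rw [map_mul, Phi1_r13, Phi1_r23, Phi1_assoc_comul] at h
  have h2 : N1 R * R = 1 * R := by rw [one_mul, ← h]
  exact IsUnit.mul_right_cancel hR.isUnit h2

private lemma N2_R (hR : IsQuasiTriangular k H R) : N2 R = 1 := by
  have h := congrArg (Phi2 (k := k) (H := H)) hR.comul_lTensor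
  rw [map_mul, Phi2_r13, Phi2_r12, Phi2_lTensor_comul] at h
  have h2 : N2 R * R = 1 * R := by rw [one_mul, ← h]
  exact IsUnit.mul_right_cancel hR.isUnit h2

private def PsiA : H ⊗[k] (H ⊗[k] H) →ₗ[k] H ⊗[k] H :=
  TensorProduct.map (mul' k H ∘ₗ rTensor H (S k H)) LinearMap.id ∘ₗ
    (TensorProduct.assoc k H H H).symm.toLinearMap

private lemma PsiA_comul (z : H ⊗[k] H) :
    PsiA ((TensorProduct.assoc k H H H) ((rTensor H (Δ k H)) z)) = N1 z := by
  have h1 : (PsiA (k := k) (H := H)) ∘ₗ (TensorProduct.assoc k H H H).toLinearMap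
      = TensorProduct.map (mul' k H ∘ₗ rTensor H (S k H)) LinearMap.id :=
    TensorProduct.ext_threefold fun x y w => by simp [PsiA]
  have h3 := LinearMap.congr_fun h1 ((rTensor H (Δ k H)) z)
  simp only [LinearMap.coe_comp, Function.comp_apply, LinearEquiv.coe_coe] at h3
  rw [h3,
    show TensorProduct.map (mul' k H ∘ₗ rTensor H (S k H)) (LinearMap.id (M := H))
      = rTensor H (mul' k H ∘ₗ rTensor H (S k H)) from rfl,
    ← LinearMap.comp_apply, ← LinearMap.rTensor_comp]
  have h4 : (mul' k H ∘ₗ rTensor H (S k H)) ∘ₗ (Δ k H)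
      = Algebra.linearMap k H ∘ₗ (ε k H) := by
    rw [LinearMap.comp_assoc]
    exact HopfAlgebra.mul_antipode_rTensor_comul
  rw [h4]
  rfl

private lemma bilA (P Q : H ⊗[k] H) :
    PsiA (r13 k H P * r23 k H Q) = rTensor H (S k H) P * Q := by
  simp only [r13, r23]
  induction P using TensorProduct.induction_on with
  | zero => simp
  | add P1 P2 h1 h2 => simp only [map_add, add_mul]; rw [h1, h2]
  | tmul a b =>
    induction Q using TensorProduct.induction_on with
    | zero => simp
    | add Q1 Q2 g1 g2 => simp only [map_add, mul_add]; rw [g1, g2]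
    | tmul c d => simp [PsiA, Algebra.TensorProduct.tmul_mul_tmul]

private lemma X_mul_R (hR : IsQuasiTriangular k H R) :
    rTensor H (S k H) R * R = 1 := by
  have h := congrArg (PsiA (k := k) (H := H)) hR.comul_rTensor
  rw [PsiA_comul, bilA, N1_R R hR] at h
  exact h.symm

private lemma R_mul_X (hR : IsQuasiTriangular k H R) :
    R * rTensor H (S k H) R = 1 := by
  obtain ⟨u, hu⟩ := hR.isUnit
  have h1 := X_mul_R R hR
  have hXu : rTensor H (S k H) R = (↑u⁻¹ : H ⊗[k] H) := by
    calc rTensor H (S k H) R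
        = rTensor H (S k H) R * (R * ↑u⁻¹) := by rw [← hu, Units.mul_inv, mul_one]
      _ = (rTensor H (S k H) R * R) * ↑u⁻¹ := by rw [mul_assoc]
      _ = ↑u⁻¹ := by rw [h1, one_mul]
  rw [hXu, ← hu, Units.mul_inv]

private def Lmap : H ⊗[k] H →ₐ[k] H ⊗[k] (H ⊗[k] H) :=
  Algebra.TensorProduct.map (AlgHom.id k H) (Bialgebra.comulAlgHom k H)

private lemma Lmap_apply (z : H ⊗[k] H) :
    Lmap (k := k) (H := H) z = lTensor H (Δ k H) z := by
  have h : (Lmap (k := k) (H := H)).toLinearMap = lTensor H (Δ k H) :=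
    TensorProduct.ext' fun x y => by simp [Lmap]
  have := LinearMap.congr_fun h z
  simpa using this

private lemma Lmap_X (hR : IsQuasiTriangular k H R) :
    Lmap (rTensor H (S k H) R)
      = r12 k H (rTensor H (S k H) R) * r13 k H (rTensor H (S k H) R) := by
  have hXR := X_mul_R R hR
  have hRX := R_mul_X R hR
  have haxiom : Lmap (k := k) (H := H) R = r13 k H R * r12 k H R := by
    rw [Lmap_apply, hR.comul_lTensor]
  have hm : Lmap (k := k) (H := H) (rTensor H (S k H) R) * (r13 k H R * r12 k H R) = 1 := by
    rw [← haxiom, ← map_mul, hXR, map_one]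
  have h1213 : ∀ z z' : H ⊗[k] H, r12 k H z * r12 k H z' = r12 k H (z * z') := by
    intro z z'; simp only [r12, ← map_mul]
  have h1313 : ∀ z z' : H ⊗[k] H, r13 k H z * r13 k H z' = r13 k H (z * z') := by
    intro z z'; simp only [r13, ← map_mul]
  have hm2 : (r13 k H R * r12 k H R) *
      (r12 k H (rTensor H (S k H) R) * r13 k H (rTensor H (S k H) R)) = 1 := by
    calc (r13 k H R * r12 k H R) *
        (r12 k H (rTensor H (S k H) R) * r13 k H (rTensor H (S k H) R))
        = r13 k H R * ((r12 k H R * r12 k H (rTensor H (S k H) R)) *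
            r13 k H (rTensor H (S k H) R)) := by rw [mul_assoc, mul_assoc]
      _ = r13 k H R * r13 k H (rTensor H (S k H) R) := by
          rw [h1213, hRX, show r12 k H (1 : H ⊗[k] H) = 1 from map_one _, one_mul]
      _ = 1 := by rw [h1313, hRX]; exact map_one _
  calc Lmap (k := k) (H := H) (rTensor H (S k H) R)
      = Lmap (k := k) (H := H) (rTensor H (S k H) R) *
          ((r13 k H R * r12 k H R) *
            (r12 k H (rTensor H (S k H) R) * r13 k H (rTensor H (S k H) R))) := by
        rw [hm2, mul_one]
    _ = (Lmap (k := k) (H := H) (rTensor H (S k H) R) * (r13 k H R * r12 k H R)) *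
          (r12 k H (rTensor H (S k H) R) * r13 k H (rTensor H (S k H) R)) := by
        rw [← mul_assoc]
    _ = r12 k H (rTensor H (S k H) R) * r13 k H (rTensor H (S k H) R) := by
        rw [hm, one_mul]

private def PsiB : H ⊗[k] (H ⊗[k] H) →ₗ[k] H ⊗[k] H :=
  lTensor H (mul' k H ∘ₗ lTensor H (S k H))

private lemma PsiB_comul (z : H ⊗[k] H) :
    PsiB ((lTensor H (Δ k H)) z) = N2 z := by
  simp only [PsiB]
  rw [← LinearMap.comp_apply, ← LinearMap.lTensor_comp]
  have h4 : (mul' k H ∘ₗ lTensor H (S k H)) ∘ₗ (Δ k H)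
      = Algebra.linearMap k H ∘ₗ (ε k H) := by
    rw [LinearMap.comp_assoc]
    exact HopfAlgebra.mul_antipode_lTensor_comul
  rw [h4]
  rfl

private lemma bilB (P Q : H ⊗[k] H) :
    PsiB (r12 k H P * r13 k H Q) = P * lTensor H (S k H) Q := by
  simp only [r12, r13]
  induction P using TensorProduct.induction_on with
  | zero => simp
  | add P1 P2 h1 h2 => simp only [map_add, add_mul]; rw [h1, h2]
  | tmul a b =>
    induction Q using TensorProduct.induction_on with
    | zero => simp
    | add Q1 Q2 g1 g2 => simp only [map_add, mul_add]; rw [g1, g2]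
    | tmul c d => simp [PsiB, Algebra.TensorProduct.tmul_mul_tmul]

private lemma N2_X (hR : IsQuasiTriangular k H R) :
    N2 (rTensor H (S k H) R) = 1 := by
  have hcomm : (N2 (k := k) (H := H)) ∘ₗ rTensor H (S k H)
      = rTensor H (S k H) ∘ₗ N2 :=
    TensorProduct.ext' fun x y => by simp [N2]
  have h := LinearMap.congr_fun hcomm R
  simp only [LinearMap.coe_comp, Function.comp_apply] at h
  rw [h, N2_R R hR]
  simp [Algebra.TensorProduct.one_def, S_one]

private lemma mapSS_R (hR : IsQuasiTriangular k H R) :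
    TensorProduct.map (S k H) (S k H) R = R := by
  have h := congrArg (PsiB (k := k) (H := H)) (Lmap_X R hR)
  rw [Lmap_apply, PsiB_comul, bilB, N2_X R hR] at h
  have h6 : lTensor H (S k H) (rTensor H (S k H) R) = R := by
    have hRX := R_mul_X R hR
    calc lTensor H (S k H) (rTensor H (S k H) R)
        = (R * rTensor H (S k H) R) * lTensor H (S k H) (rTensor H (S k H) R) := by
          rw [hRX, one_mul]
      _ = R * (rTensor H (S k H) R * lTensor H (S k H) (rTensor H (S k H) R)) := by
          rw [mul_assoc]
      _ = R := by rw [← h, mul_one]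
  have hms := LinearMap.congr_fun
    (LinearMap.lTensor_comp_rTensor (g := S k H) (f := S k H)) R
  simp only [LinearMap.coe_comp, Function.comp_apply] at hms
  rw [← hms, h6]

private lemma comm_mul (P Q : H ⊗[k] H) :
    (TensorProduct.comm k H H) (P * Q)
      = (TensorProduct.comm k H H) P * (TensorProduct.comm k H H) Q := by
  induction P using TensorProduct.induction_on with
  | zero => simp
  | add P1 P2 h1 h2 => simp only [map_add, add_mul]; rw [h1, h2]
  | tmul a b =>
    induction Q using TensorProduct.induction_on with
    | zero => simp
    | add Q1 Q2 g1 g2 => simp only [map_add, mul_add]; rw [g1, g2]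
    | tmul c d => simp [Algebra.TensorProduct.tmul_mul_tmul]

private lemma comm_comm (P : H ⊗[k] H) :
    (TensorProduct.comm k H H) ((TensorProduct.comm k H H) P) = P := by
  induction P using TensorProduct.induction_on with
  | zero => simp
  | add P1 P2 h1 h2 => simp [h1, h2]
  | tmul a b => simp

private lemma mapSS_mul (P Q : H ⊗[k] H) :
    TensorProduct.map (S k H) (S k H) P * TensorProduct.map (S k H) (S k H) Q
      = TensorProduct.map (S k H) (S k H) (Q * P) := by
  induction P using TensorProduct.induction_on with
  | zero => simp
  | add P1 P2 h1 h2 => simp only [map_add, add_mul, mul_add]; rw [h1, h2]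
  | tmul a b =>
    induction Q using TensorProduct.induction_on with
    | zero => simp
    | add Q1 Q2 g1 g2 => simp only [map_add, mul_add, add_mul]; rw [g1, g2]
    | tmul c d => simp [Algebra.TensorProduct.tmul_mul_tmul, S_mul]

private lemma comm_mapSS (P : H ⊗[k] H) :
    (TensorProduct.comm k H H) (TensorProduct.map (S k H) (S k H) P)
      = TensorProduct.map (S k H) (S k H) ((TensorProduct.comm k H H) P) := by
  induction P using TensorProduct.induction_on with
  | zero => simp
  | add P1 P2 h1 h2 => simp [h1, h2]
  | tmul a b => simp

private lemma vElt_eq : vElt k H R = (TensorProduct.comm k H H) R * R := by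
  rw [vElt, comm_mul, comm_comm]

private lemma vElt_SS (hR : IsQuasiTriangular k H R) :
    vElt k H R
      = TensorProduct.map (S k H) (S k H) (R * (TensorProduct.comm k H H) R) := by
  rw [vElt_eq, ← mapSS_mul ((TensorProduct.comm k H H) R) R, ← comm_mapSS R,
    mapSS_R R hR]

private lemma factMap_mem_range (hR : IsQuasiTriangular k H R) (p : Module.Dual k H) :
    factMap k H R p ∈ Set.range (S k H) := by
  have hL : ∀ t : H ⊗[k] H,
      (TensorProduct.lid k H) ((rTensor H p) (TensorProduct.map (S k H) (S k H) t))
        = S k H ((TensorProduct.lid k H) ((rTensor H (p ∘ₗ S k H)) t)) := by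
    intro t
    induction t using TensorProduct.induction_on with
    | zero => simp
    | add t1 t2 h1 h2 => simp only [map_add, h1, h2]
    | tmul x y => simp
  rw [show factMap k H R p
      = (TensorProduct.lid k H) ((rTensor H p) (vElt k H R)) from rfl,
    vElt_SS R hR, hL]
  exact ⟨_, rfl⟩

private lemma S_bijective [FiniteDimensional k H] (hR : IsQuasiTriangular k H R)
    (hfact : IsFactorizable k H R) : Function.Bijective (S k H) := by
  have hsurj : Function.Surjective (S k H) := by
    intro h
    obtain ⟨p, hp⟩ := (hfact : Function.Bijective (factMap k H R)).2 h
    have hmem := factMap_mem_range R hR p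
    rw [hp] at hmem
    exact hmem
  exact ⟨LinearMap.injective_iff_surjective.mpr hsurj, hsurj⟩

private lemma theta_surj [FiniteDimensional k H] (hR : IsQuasiTriangular k H R)
    (hfact : IsFactorizable k H R) (h : H) :
    ∃ p : Module.Dual k H,
      (TensorProduct.lid k H) ((rTensor H p) (uElt k H R)) = h := by
  obtain ⟨q, hq⟩ := (hfact : Function.Bijective (factMap k H R)).2 h
  let e := LinearEquiv.ofBijective (S k H) (S_bijective R hR hfact)
  refine ⟨q ∘ₗ (e.symm : H →ₗ[k] H), ?_⟩
  have hu : uElt k H R = rTensor H (S k H) (vElt k H R) := by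
    rw [uElt, vElt_eq]
  rw [hu, ← LinearMap.comp_apply, ← LinearMap.rTensor_comp]
  have hcomp : ((q ∘ₗ (e.symm : H →ₗ[k] H)) ∘ₗ S k H) = q := by
    ext x
    have hx : e.symm (S k H x) = x := by
      rw [LinearEquiv.symm_apply_eq, LinearEquiv.ofBijective_apply]
    simp [hx]
  rw [hcomp]
  exact hq

private lemma actT_tmul {W : Type*} [AddCommGroup W] [Module k W] [Module H W]
    [IsScalarTower k H W] (h : H) (w : W) : actT W (h ⊗ₜ[k] w) = h • w := by
  simp [actT]

private lemma coact_pair {W : Type*} [AddCommGroup W] [Module k W]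
    [Module H W] [IsScalarTower k H W] (p : Module.Dual k H) (w : W) :
    (TensorProduct.lid k W) ((rTensor W p) (coactR R (actT W) w)) =
      ((TensorProduct.lid k H) ((rTensor H p) (uElt k H R))) • w := by
  have main : ∀ z : H ⊗[k] H,
      (TensorProduct.lid k W) ((rTensor W p) ((lTensor H (actT W))
        ((TensorProduct.assoc k H H W) (z ⊗ₜ[k] w)))) =
      ((TensorProduct.lid k H) ((rTensor H p) z)) • w := by
    intro z
    induction z using TensorProduct.induction_on with
    | zero => simp
    | tmul a b => simp [actT_tmul, smul_assoc]
    | add z1 z2 h1 h2 =>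
      simp only [TensorProduct.add_tmul, map_add, h1, h2, add_smul]
  simpa [coactR] using main (uElt k H R)

end AuxiliaryProofs2


universe u_rep u_vec

/-- A bundled left `H`-module (over the base field `k`). -/
structure Rep (k : Type*) (H : Type*) [Field k] [Ring H] [HopfAlgebra k H] where
  carrier : Type u_rep
  [isAddCommGroup : AddCommGroup carrier]
  [isModuleBase : Module k carrier]
  [isModuleH : Module H carrier]
  [isTower : IsScalarTower k H carrier]

attribute [instance] Rep.isAddCommGroup Rep.isModuleBase Rep.isModuleH Rep.isTower

/-- A bundled `k`-vector space. -/
structure Vect (k : Type*) [Field k] where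
  carrier : Type u_vec
  [isAddCommGroup : AddCommGroup carrier]
  [isModuleBase : Module k carrier]

attribute [instance] Vect.isAddCommGroup Vect.isModuleBase


/-- Let `(H,R)` be a factorizable finite-dimensional quasi-triangular
Hopf algebra over an algebraically closed field `k`, and `W` a simple left `H`-module.
Then `W`, with its canonical `H_R`-comodule structure, is a simple left `H_R`-comodule,
and `End^{H_R}(W) ≅ k`. -/
theorem simple_comodule_of_simple_module [IsAlgClosed k] [FiniteDimensional k H]
    (R : H ⊗[k] H) (hR : IsQuasiTriangular k H R) (hfact : IsFactorizable k H R)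
    (W : Type*) [AddCommGroup W] [Module k W] [Module H W] [IsScalarTower k H W]
    [Module.Finite k W] (hW : IsSimpleModule H W) :
    IsSimpleComodule (coactR R (actT W)) ∧
      ∀ α : Module.End k W,
        lTensor H α ∘ₗ coactR R (actT W) = coactR R (actT W) ∘ₗ α →
        ∃ c : k, α = c • LinearMap.id := by
  classical
  haveI := hW
  have hθ : ∀ h : H, ∃ p : Module.Dual k H,
      (TensorProduct.lid k H) ((rTensor H p) (uElt k H R)) = h :=
    fun h => theta_surj R hR hfact h
  have hpair : ∀ (p : Module.Dual k H) (w : W),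
      (TensorProduct.lid k W) ((rTensor W p) (coactR R (actT W) w)) =
        ((TensorProduct.lid k H) ((rTensor H p) (uElt k H R))) • w :=
    fun p w => coact_pair R p w
  have hstab : ∀ U : Submodule k W, IsSubcomodule (coactR R (actT W)) U →
      ∀ (h : H) (u : W), u ∈ U → h • u ∈ U := by
    intro U hU h u hu
    obtain ⟨p, hp⟩ := hθ h
    obtain ⟨z, hz⟩ := hU u hu
    have h1 : h • u = (TensorProduct.lid k W) ((rTensor W p) (coactR R (actT W) u)) := by
      rw [hpair, hp]
    rw [h1, ← hz]
    clear hz h1 hu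
    induction z using TensorProduct.induction_on with
    | zero => simp
    | tmul a v =>
      have hval : (TensorProduct.lid k W) ((rTensor W p) ((lTensor H U.subtype) (a ⊗ₜ[k] v)))
          = p a • (v : W) := by simp
      rw [hval]
      exact U.smul_mem _ v.2
    | add x y hx hy =>
      simp only [map_add]
      exact U.add_mem hx hy
  have hdich : ∀ U : Submodule k W, (∀ (h : H) (u : W), u ∈ U → h • u ∈ U) →
      U = ⊥ ∨ U = ⊤ := by
    intro U hstabU
    let U' : Submodule H W :=
      { carrier := (U : Set W)
        add_mem' := fun ha hb => U.add_mem ha hb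
        zero_mem' := U.zero_mem
        smul_mem' := fun c {x} hx => hstabU c x hx }
    rcases eq_bot_or_eq_top U' with hb | ht
    · left
      rw [eq_bot_iff]
      intro x hx
      have hx' : x ∈ U' := hx
      rw [hb] at hx'
      simpa using hx'
    · right
      rw [eq_top_iff]
      intro x _
      have hx' : x ∈ U' := by rw [ht]; trivial
      exact hx'
  have hbt : (⊥ : Submodule k W) ≠ ⊤ := by
    intro hcon
    have hall : ∀ w : W, w = 0 := by
      intro w
      have hw : w ∈ (⊥ : Submodule k W) := by rw [hcon]; trivial
      simpa using hw
    have hHbt : (⊥ : Submodule H W) = ⊤ := by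
      ext w
      simp [hall w]
    exact bot_ne_top hHbt
  haveI : Nontrivial W := by
    by_contra hcon
    rw [not_nontrivial_iff_subsingleton] at hcon
    exact hbt (by ext w; simp [Subsingleton.elim w 0])
  refine ⟨⟨hbt, fun U hU => hdich U (hstab U hU)⟩, ?_⟩
  intro α hα
  have hcomm : ∀ (h : H) (w : W), α (h • w) = h • α w := by
    intro h w
    obtain ⟨p, hp⟩ := hθ h
    have h2 : coactR R (actT W) (α w) = (lTensor H α) (coactR R (actT W) w) :=
      (LinearMap.congr_fun hα w).symm
    have h3 : ∀ t : H ⊗[k] W,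
        (TensorProduct.lid k W) ((rTensor W p) ((lTensor H α) t))
          = α ((TensorProduct.lid k W) ((rTensor W p) t)) := by
      intro t
      induction t using TensorProduct.induction_on with
      | zero => simp
      | tmul a v => simp
      | add x y hx hy => simp only [map_add]; rw [hx, hy]
    calc α (h • w)
        = α ((TensorProduct.lid k W) ((rTensor W p) (coactR R (actT W) w))) := by
          rw [hpair, hp]
      _ = (TensorProduct.lid k W) ((rTensor W p) ((lTensor H α) (coactR R (actT W) w))) :=
          (h3 _).symm
      _ = (TensorProduct.lid k W) ((rTensor W p) (coactR R (actT W) (α w))) := by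
          rw [← h2]
      _ = h • α w := by rw [hpair, hp]
  obtain ⟨c, hc⟩ := Module.End.exists_eigenvalue α
  refine ⟨c, ?_⟩
  have hstabE : ∀ (h : H) (u : W), u ∈ α.eigenspace c → h • u ∈ α.eigenspace c := by
    intro h u hu
    rw [Module.End.mem_eigenspace_iff] at hu ⊢
    rw [hcomm, hu]
    calc h • (c • u) = h • ((algebraMap k H c) • u) := by rw [algebraMap_smul]
      _ = (h * algebraMap k H c) • u := by rw [mul_smul]
      _ = (algebraMap k H c * h) • u := by rw [Algebra.commutes]
      _ = (algebraMap k H c) • (h • u) := by rw [mul_smul]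
      _ = c • (h • u) := by rw [algebraMap_smul]
  rcases hdich (α.eigenspace c) hstabE with hb | ht
  · exact absurd hb (Module.End.hasEigenvalue_iff.mp hc)
  · apply LinearMap.ext
    intro w
    have hw : w ∈ α.eigenspace c := ht ▸ Submodule.mem_top
    rw [Module.End.mem_eigenspace_iff] at hw
    simpa using hw

end Paper
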